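/- arXiv:1306.5429 — 2 statements merged into one kernel-verified Lean document; each statement's English description precedes it below -/
import Mathlib

section
/- With b_n and B_n as above, for every n ≥ 1 the identity B_n(x) + b_n/(6x−1) = −(B_n(x) + b_n/(6x+1)) + (12(x+n)(x−1)(6x−5)/((x+n−1)(6x+1)(6x−1)))·(B_n(x−1) + b_n/(6x−5)) + 18(6n−1)·(2(x+n)/(x+n−1))·(B_{n−1}(x) + b_{n−1}/(6x−1)) holds in ℚ(x). -/
set_option maxHeartbeats 1000000


open Polynomial

/-- The odd double factorial: `oddFac k = (2k+1)!! = 1·3·5···(2k+1)`. -/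
def oddFac (k : ℕ) : ℕ := ∏ i ∈ Finset.range (k+1), (2*i+1)

/-- `bSeq n = 2^n·(6n+1)!!/(2n)!` as a rational number. -/
def bSeq (n : ℕ) : ℚ := 2^n * oddFac (3*n) / (2*n).factorial

/-- The falling factorial `(p)_{[j]} = p(p-1)···(p-j+1)` of a polynomial `p`, with
`(p)_{[0]} = 1`. -/
noncomputable def ff (p : Polynomial ℚ) (j : ℕ) : Polynomial ℚ :=
  ∏ i ∈ Finset.range j, (p - Polynomial.C (i : ℚ))

/-- The polynomial `B_n(x) = (1/6)·Σ_{j=1}^{n} 108^j·b_{n−j}·(x+n)_{[j−1]}`. -/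
noncomputable def Bpoly (n : ℕ) : Polynomial ℚ :=
  Polynomial.C (1/6 : ℚ) *
    ∑ j ∈ Finset.Icc 1 n,
      Polynomial.C ((108:ℚ)^j * bSeq (n-j)) * ff (Polynomial.X + Polynomial.C (n:ℚ)) (j-1)

noncomputable section

/-- The image of `B_n` in the field of rational functions `ℚ(x)`. -/
def Bf (n : ℕ) : RatFunc ℚ := algebraMap (Polynomial ℚ) (RatFunc ℚ) (Bpoly n)

/-- The image of `B_n(x+1)` in `ℚ(x)`. -/
def BfShiftUp (n : ℕ) : RatFunc ℚ :=
  algebraMap (Polynomial ℚ) (RatFunc ℚ) ((Bpoly n).comp (Polynomial.X + 1))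

/-- The image of `B_n(x-1)` in `ℚ(x)`. -/
def BfShiftDown (n : ℕ) : RatFunc ℚ :=
  algebraMap (Polynomial ℚ) (RatFunc ℚ) ((Bpoly n).comp (Polynomial.X - 1))

/-- The generator `x` of `ℚ(x)`. -/
def Xr : RatFunc ℚ := RatFunc.X

/-- Constant rational functions. -/
def cst (a : ℚ) : RatFunc ℚ := RatFunc.C a

end


open Finset in
lemma bRec (m : ℕ) : ((m:ℚ)+1) * bSeq (m+1) = 3*(6*m+7)*(6*m+5) * bSeq m := by
  have h1 : oddFac (3*(m+1)) = oddFac (3*m) * ((6*m+3)*((6*m+5)*(6*m+7))) := by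
    show (∏ i ∈ Finset.range (3*(m+1)+1), (2*i+1)) = _
    have : 3*(m+1)+1 = (3*m+1)+1+1+1 := by ring
    rw [this, Finset.prod_range_succ, Finset.prod_range_succ, Finset.prod_range_succ]
    unfold oddFac
    ring
  have h2 : (2*(m+1)).factorial = (2*m).factorial * ((2*m+1)*(2*m+2)) := by
    have : 2*(m+1) = (2*m+1)+1 := by ring
    rw [this, Nat.factorial_succ, Nat.factorial_succ]
    ring
  have hf : ((2*m).factorial : ℚ) ≠ 0 := by positivity
  unfold bSeq
  rw [h1, h2]
  push_cast
  field_simp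
  ring

noncomputable def sF (p : Polynomial ℚ) (n k : ℕ) : Polynomial ℚ :=
  C ((108:ℚ)^(k+1) * bSeq (n-1-k)) * ff p k

noncomputable def TF (m k : ℕ) : Polynomial ℚ :=
  C (6*(108:ℚ)^(k+1) * ((m-k:ℕ):ℚ) * bSeq (m-k)) * ff (X + C ((m:ℚ)+1) - 1) k
    * (X + C ((m:ℚ)+1)) * (6*X-5)^2

lemma ff_succ_shift (q : Polynomial ℚ) (k : ℕ) : ff (q+1) (k+1) = (q+1) * ff q k := by
  unfold ff
  rw [Finset.prod_range_succ', mul_comm]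
  congr 1
  · simp
  · refine Finset.prod_congr rfl fun i _ => ?_
    have : ((i+1:ℕ):ℚ) = (i:ℚ)+1 := by push_cast; ring
    rw [this, map_add, map_one]
    ring

lemma ff_succ (q : Polynomial ℚ) (k : ℕ) : ff q (k+1) = ff q k * (q - C (k:ℚ)) :=
  Finset.prod_range_succ _ _

lemma stepL (m k : ℕ) (hk : k < m) :
    ((X + C ((m:ℚ)+1) - 1)*(6*X-1)*(6*X+1)*(6*X-5)) * sF (X + C ((m:ℚ)+1)) (m+1) (k+1)
      - (6*(X + C ((m:ℚ)+1))*(X-1)*(6*X-5)^2) * sF (X + C ((m:ℚ)+1) - 1) (m+1) (k+1)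
      - (C (108*((m:ℚ)+1)-18) * ((X + C ((m:ℚ)+1))*(6*X-1)*(6*X+1)*(6*X-5)))
          * sF (X + C ((m:ℚ)+1) - 1) m k
    = TF m k - TF m (k+1) := by
  unfold sF TF
  simp only [Nat.add_sub_cancel]
  have e1 : ff (X + C ((m:ℚ)+1)) (k+1) = (X + C ((m:ℚ)+1)) * ff (X + C ((m:ℚ)+1) - 1) k := by
    have := ff_succ_shift (X + C ((m:ℚ)+1) - 1) k
    rw [sub_add_cancel] at this
    exact this
  rw [e1, ff_succ]
  have c0 : m - 1 - k = m - (k+1) := by omega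
  have c1 : ((m-(k+1):ℕ):ℚ) = (m:ℚ) - k - 1 := by
    rw [Nat.cast_sub hk]; push_cast; ring
  have c2 : ((m-k:ℕ):ℚ) = (m:ℚ) - k := by
    rw [Nat.cast_sub (le_of_lt hk)]
  have hr := bRec (m-(k+1))
  rw [show m-(k+1)+1 = m-k from by omega] at hr
  rw [c1] at hr
  rw [c0, c1, c2]
  apply Polynomial.funext
  intro x
  simp only [eval_mul, eval_add, eval_sub, eval_pow, eval_ofNat, eval_C, eval_X, eval_one]
  linear_combination (-(6:ℚ) * 108^(k+1) * (ff (X + C ((m:ℚ)+1) - 1) k).eval x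
    * (x + ((m:ℚ)+1)) * (6*x-5)^2) * hr

noncomputable def Ssum (n : ℕ) (p : Polynomial ℚ) : Polynomial ℚ :=
  ∑ k ∈ Finset.range n, sF p n k

lemma TFm (m : ℕ) : TF m m = 0 := by
  unfold TF
  simp

lemma hsum (m : ℕ) :
    ((X + C ((m:ℚ)+1) - 1)*(6*X-1)*(6*X+1)*(6*X-5))
        * (∑ k ∈ Finset.range m, sF (X + C ((m:ℚ)+1)) (m+1) (k+1))
      - (6*(X + C ((m:ℚ)+1))*(X-1)*(6*X-5)^2)
        * (∑ k ∈ Finset.range m, sF (X + C ((m:ℚ)+1) - 1) (m+1) (k+1))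
      - (C (108*((m:ℚ)+1)-18) * ((X + C ((m:ℚ)+1))*(6*X-1)*(6*X+1)*(6*X-5)))
          * (∑ k ∈ Finset.range m, sF (X + C ((m:ℚ)+1) - 1) m k)
    = TF m 0 := by
  rw [Finset.mul_sum, Finset.mul_sum, Finset.mul_sum, ← Finset.sum_sub_distrib,
    ← Finset.sum_sub_distrib,
    Finset.sum_congr rfl (fun k hk => stepL m k (Finset.mem_range.mp hk)),
    Finset.sum_range_sub' (TF m) m, TFm, sub_zero]

lemma keyS (m : ℕ) :
    ((X + C ((m:ℚ)+1) - 1)*(6*X-1)*(6*X+1)*(6*X-5)) * Ssum (m+1) (X + C ((m:ℚ)+1))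
      + C (36*bSeq (m+1)) * (X*(X + C ((m:ℚ)+1) - 1)*(6*X-5))
    = (6*(X + C ((m:ℚ)+1))*(X-1)*(6*X-5)^2) * Ssum (m+1) (X + C ((m:ℚ)+1) - 1)
      + C (36*bSeq (m+1)) * ((X + C ((m:ℚ)+1))*(X-1)*(6*X-5))
      + (C (108*((m:ℚ)+1)-18) * ((X + C ((m:ℚ)+1))*(6*X-1)*(6*X+1)*(6*X-5)))
          * Ssum m (X + C ((m:ℚ)+1) - 1)
      + C (108*bSeq m*(6*((m:ℚ)+1)-1)) * ((X + C ((m:ℚ)+1))*(6*X+1)*(6*X-5)) := by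
  have h1 : Ssum (m+1) (X + C ((m:ℚ)+1))
      = (∑ k ∈ Finset.range m, sF (X + C ((m:ℚ)+1)) (m+1) (k+1))
        + sF (X + C ((m:ℚ)+1)) (m+1) 0 := Finset.sum_range_succ' _ m
  have h2 : Ssum (m+1) (X + C ((m:ℚ)+1) - 1)
      = (∑ k ∈ Finset.range m, sF (X + C ((m:ℚ)+1) - 1) (m+1) (k+1))
        + sF (X + C ((m:ℚ)+1) - 1) (m+1) 0 := Finset.sum_range_succ' _ m
  have h0 : ∀ p : Polynomial ℚ, sF p (m+1) 0 = C (108 * bSeq m) := by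
    intro p
    unfold sF ff
    norm_num
  have hTF0 : TF m 0 = C (648*((m:ℕ):ℚ)*bSeq m) * ((X + C ((m:ℚ)+1)) * (6*X-5)^2) := by
    unfold TF ff
    norm_num
    ring
  have hs := hsum m
  rw [hTF0] at hs
  rw [h1, h2, h0, h0, Ssum]
  have hrx := bRec m
  apply Polynomial.funext
  intro x
  have hsx := congrArg (Polynomial.eval x) hs
  simp only [eval_mul, eval_add, eval_sub, eval_pow, eval_ofNat, eval_C, eval_X, eval_one,
    eval_finset_sum] at hsx ⊢
  linear_combination hsx + ((36:ℚ)*(6*x-5)) * hrx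

lemma six_C : C (6:ℚ) * C (1/6:ℚ) = 1 := by
  rw [← map_mul]; norm_num

lemma hB (n : ℕ) : C (6:ℚ) * Bpoly n = Ssum n (X + C (n:ℚ)) := by
  unfold Bpoly Ssum
  rw [← mul_assoc, six_C, one_mul, ← Finset.Ico_add_one_right_eq_Icc, Finset.sum_Ico_eq_sum_range]
  norm_num
  refine Finset.sum_congr rfl fun i _ => ?_
  have h1 : n - (1+i) = n-1-i := by omega
  rw [h1, add_comm 1 i]
  unfold sF
  rw [map_mul, map_pow]

lemma ff_comp (p q : Polynomial ℚ) (k : ℕ) : (ff p k).comp q = ff (p.comp q) k := by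
  simp [ff, Polynomial.prod_comp, sub_comp, C_comp]

lemma hBc (n : ℕ) : C (6:ℚ) * (Bpoly n).comp (X - 1) = Ssum n (X + C (n:ℚ) - 1) := by
  have h := congrArg (fun p => p.comp (X - 1)) (hB n)
  simp only [mul_comp, Polynomial.sum_comp, Ssum, C_comp, X_comp, ff_comp, add_comp] at h ⊢
  rw [h]
  refine Finset.sum_congr rfl fun i _ => ?_
  unfold sF
  simp only [mul_comp, C_comp, ff_comp, add_comp, X_comp]
  congr 2
  ring

lemma keyB (m : ℕ) :
    ((X + C ((m:ℚ)+1) - 1)*(6*X-1)*(6*X+1)*(6*X-5)) * (C (6:ℚ) * Bpoly (m+1))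
      + C (36*bSeq (m+1)) * (X*(X + C ((m:ℚ)+1) - 1)*(6*X-5))
    = (6*(X + C ((m:ℚ)+1))*(X-1)*(6*X-5)^2) * (C (6:ℚ) * (Bpoly (m+1)).comp (X-1))
      + C (36*bSeq (m+1)) * ((X + C ((m:ℚ)+1))*(X-1)*(6*X-5))
      + (C (108*((m:ℚ)+1)-18) * ((X + C ((m:ℚ)+1))*(6*X-1)*(6*X+1)*(6*X-5))) * (C (6:ℚ) * Bpoly m)
      + C (108*bSeq m*(6*((m:ℚ)+1)-1)) * ((X + C ((m:ℚ)+1))*(6*X+1)*(6*X-5)) := by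
  have h1 := hB (m+1)
  have h2 := hBc (m+1)
  have h3 := hB m
  rw [show ((m+1:ℕ):ℚ) = (m:ℚ)+1 from by push_cast; ring] at h1 h2
  rw [show (X + C ((m:ℚ)) : Polynomial ℚ) = X + C ((m:ℚ)+1) - 1 from by rw [map_add, map_one]; ring] at h3
  rw [h1, h2, h3]
  exact keyS m


lemma keyB2 (m : ℕ) :
    ((X + C ((m:ℚ)+1) - 1)*(6*X-1)*(6*X+1)*(6*X-5)) * (2 * Bpoly (m+1))
      + C (12*bSeq (m+1)) * (X*(X + C ((m:ℚ)+1) - 1)*(6*X-5))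
    = (6*(X + C ((m:ℚ)+1))*(X-1)*(6*X-5)^2) * (2 * (Bpoly (m+1)).comp (X-1))
      + C (12*bSeq (m+1)) * ((X + C ((m:ℚ)+1))*(X-1)*(6*X-5))
      + (C (108*((m:ℚ)+1)-18) * ((X + C ((m:ℚ)+1))*(6*X-1)*(6*X+1)*(6*X-5))) * (2 * Bpoly m)
      + C (36*bSeq m*(6*((m:ℚ)+1)-1)) * ((X + C ((m:ℚ)+1))*(6*X+1)*(6*X-5)) := by
  have hk := keyB m
  apply Polynomial.funext
  intro x
  have h := congrArg (Polynomial.eval x) hk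
  simp only [eval_mul, eval_add, eval_sub, eval_pow, eval_ofNat, eval_C, eval_X, eval_one] at h ⊢
  linear_combination (1/3 : ℚ) * h

/-- The identity in `ℚ(x)`, for `n ≥ 1`:
`B_n(x) + b_n/(6x−1) = −(B_n(x) + b_n/(6x+1))
 + (12(x+n)(x−1)(6x−5)/((x+n−1)(6x+1)(6x−1)))·(B_n(x−1) + b_n/(6x−5))
 + 18(6n−1)·(2(x+n)/(x+n−1))·(B_{n−1}(x) + b_{n−1}/(6x−1))`. -/
theorem stmt5 (n : ℕ) (hn : 1 ≤ n) :
    Bf n + cst (bSeq n) / (6*Xr-1)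
      = -(Bf n + cst (bSeq n) / (6*Xr+1))
        + (12 * (Xr + (n : RatFunc ℚ)) * (Xr - 1) * (6*Xr-5)
            / ((Xr + (n : RatFunc ℚ) - 1) * (6*Xr+1) * (6*Xr-1)))
          * (BfShiftDown n + cst (bSeq n) / (6*Xr-5))
        + 18 * (6*(n : RatFunc ℚ) - 1) * (2 * (Xr + (n : RatFunc ℚ)) / (Xr + (n : RatFunc ℚ) - 1))
          * (Bf (n-1) + cst (bSeq (n-1)) / (6*Xr-1)) := by
  obtain ⟨m, rfl⟩ : ∃ m, n = m+1 := ⟨n-1, by omega⟩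
  have inj := RatFunc.algebraMap_injective ℚ
  set A := algebraMap (Polynomial ℚ) (RatFunc ℚ) with hA
  have hne : ∀ p : Polynomial ℚ, p.eval 1 ≠ 0 → A p ≠ 0 := by
    intro p hp
    refine (map_ne_zero_iff _ inj).mpr fun h => hp ?_
    rw [h]; simp
  have hcast : ((m+1:ℕ) : RatFunc ℚ) = A (C ((m:ℚ)+1)) := by
    rw [RatFunc.algebraMap_C, map_add, map_one, map_natCast]
    push_cast
    ring
  have h1 : (6 * A X - 1 : RatFunc ℚ) ≠ 0 := by
    rw [show (6 * A X - 1 : RatFunc ℚ) = A (6*X-1) from by simp [map_ofNat]]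
    exact hne _ (by norm_num)
  have h2 : (6 * A X + 1 : RatFunc ℚ) ≠ 0 := by
    rw [show (6 * A X + 1 : RatFunc ℚ) = A (6*X+1) from by simp [map_ofNat]]
    exact hne _ (by norm_num)
  have h3 : (6 * A X - 5 : RatFunc ℚ) ≠ 0 := by
    rw [show (6 * A X - 5 : RatFunc ℚ) = A (6*X-5) from by simp [map_ofNat]]
    exact hne _ (by norm_num)
  have h4 : (A X + A (C ((m:ℚ)+1)) - 1 : RatFunc ℚ) ≠ 0 := by
    rw [show (A X + A (C ((m:ℚ)+1)) - 1 : RatFunc ℚ) = A (X + C ((m:ℚ)+1) - 1) from by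
      simp [map_ofNat]]
    refine hne _ ?_
    simp
    positivity
  have hk := congrArg A (keyB2 m)
  simp only [map_mul, map_add, map_sub, map_pow, map_ofNat, map_one, map_natCast] at hk h4
  simp only [Bf, BfShiftDown, cst, Nat.add_sub_cancel, hcast,
    show RatFunc.C (bSeq (m+1)) = A (C (bSeq (m+1))) from (RatFunc.algebraMap_C _).symm,
    show RatFunc.C (bSeq m) = A (C (bSeq m)) from (RatFunc.algebraMap_C _).symm, Xr,
    show (RatFunc.X : RatFunc ℚ) = A X from (RatFunc.algebraMap_X).symm]
  simp only [map_mul, map_add, map_sub, map_pow, map_ofNat, map_one, map_natCast]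
  rw [div_mul_eq_mul_div]
  field_simp [h1, h2, h3, h4]
  have hG : ((6 * A X + 1) * ((6*A X - 5) * ((A X + ((m:RatFunc ℚ)+1) - 1) * (6*A X + 1) * (6*A X - 1))) : RatFunc ℚ) ≠ 0 :=
    mul_ne_zero h2 (mul_ne_zero h3 (mul_ne_zero (mul_ne_zero h4 h2) h1))
  apply mul_left_cancel₀ h3
  linear_combination hk
end

section
/- With b_n and B_n as above, for every n ≥ 0 the identity B_{n+1}(x) + b_{n+1}/(6x+1) = −(3(6x+5)(6x+7)/x)·(B_n(x+1) + b_n/(6x+7)) + 216(x+n+1)·(B_n(x) + b_n/(6x+1)) + (2^{n+1}·(6n+5)!!/(2n+2)!)·(x+n+1)/(x(6x+1)) holds in ℚ(x). -/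
open Polynomial

def cseq (n : ℕ) : ℚ := 2^(n+1) * (oddFac (3*n+2) : ℚ) / (2*n+2).factorial

lemma oddFac_succ (k : ℕ) : oddFac (k+1) = oddFac k * (2*k+3) := by
  unfold oddFac
  rw [Finset.prod_range_succ]
  ring

lemma fact_ne (m : ℕ) : ((m.factorial : ℚ)) ≠ 0 := by
  exact_mod_cast m.factorial_ne_zero

lemma e1 (n : ℕ) : bSeq (n+1) = cseq n * (6*(n:ℚ)+7) := by
  unfold bSeq cseq
  have h3 : 3*(n+1) = 3*n+2+1 := by ring
  have h2 : 2*(n+1) = 2*n+2 := by ring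
  rw [h3, h2, oddFac_succ]
  push_cast
  ring

lemma e2 (n : ℕ) : bSeq n * ((6*(n:ℚ)+3)*(6*(n:ℚ)+5)) = cseq n * ((2*(n:ℚ)+1)*((n:ℚ)+1)) := by
  unfold bSeq cseq
  have h3 : 3*n+2 = (3*n)+1+1 := by ring
  rw [h3, oddFac_succ, oddFac_succ]
  have h2 : 2*n+2 = (2*n+1)+1 := by ring
  rw [h2, Nat.factorial_succ]
  have h2' : 2*n+1 = (2*n)+1 := rfl
  rw [h2', Nat.factorial_succ]
  have := fact_ne (2*n)
  field_simp
  push_cast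
  ring

lemma e3 (n : ℕ) : cseq (n+1) * ((2*(n:ℚ)+3)*(2*(n:ℚ)+4))
    = cseq n * (2*(6*(n:ℚ)+7)*(6*(n:ℚ)+9)*(6*(n:ℚ)+11)) := by
  unfold cseq
  have h3 : 3*(n+1)+2 = (3*n+2)+1+1+1 := by ring
  rw [h3, oddFac_succ, oddFac_succ, oddFac_succ]
  have h2 : 2*(n+1)+2 = (2*n+2)+1+1 := by ring
  rw [h2, Nat.factorial_succ, Nat.factorial_succ]
  have := fact_ne (2*n+2)
  field_simp
  push_cast
  ring

-- evaluated recurrence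
lemma ff_shift (a : ℚ) (j : ℕ) :
    ff (X + C (a+1)) (j+1) = (X + C (a+1)) * ff (X + C a) j := by
  unfold ff
  rw [Finset.prod_range_succ']
  rw [mul_comm]
  congr 1
  · simp
  · exact Finset.prod_congr rfl fun i _ => by
      push_cast
      simp only [C_add, C_1]
      ring

noncomputable def T (n : ℕ) : ℚ[X] :=
  ∑ i ∈ Finset.range n, C ((108:ℚ)^(i+1) * bSeq (n-(i+1))) * ff (X + C (n:ℚ)) i

lemma Bpoly_eq_T (n : ℕ) : Bpoly n = C (1/6 : ℚ) * T n := by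
  unfold Bpoly T
  congr 1
  rw [← Finset.Ico_add_one_right_eq_Icc, Finset.sum_Ico_eq_sum_range]
  simp only [Nat.add_sub_cancel]
  refine Finset.sum_congr rfl fun i _ => ?_
  congr 2
  · rw [add_comm 1 i]
  · omega

lemma T_rec (n : ℕ) : T (n+1) = C (108 * bSeq n) + C 108 * (X + C ((n:ℚ)+1)) * T n := by
  unfold T
  rw [Finset.sum_range_succ']
  have h0 : C ((108:ℚ)^(0+1) * bSeq (n+1-(0+1))) * ff (X + C ((n+1 : ℕ):ℚ)) 0
      = C (108 * bSeq n) := by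
    simp [ff]
  rw [h0]
  rw [add_comm]
  congr 1
  rw [Finset.mul_sum]
  refine Finset.sum_congr rfl fun i _ => ?_
  have hc : ((n+1 : ℕ):ℚ) = (n:ℚ)+1 := by push_cast; ring
  rw [hc, ff_shift]
  have hs : n+1-(i+1+1) = n-(i+1) := by omega
  rw [hs, show (108:ℚ)^(i+1+1) * bSeq (n-(i+1)) = 108 * ((108:ℚ)^(i+1) * bSeq (n-(i+1))) by ring,
    C_mul]
  ring

lemma eval_Bpoly_succ (n : ℕ) (x : ℚ) :
    eval x (Bpoly (n+1)) = 18 * bSeq n + 108*(x + (n:ℚ) + 1) * eval x (Bpoly n) := by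
  rw [Bpoly_eq_T, Bpoly_eq_T, T_rec]
  simp only [eval_mul, eval_add, eval_C, eval_X]
  ring

lemma bSeq_zero : bSeq 0 = 1 := by
  norm_num [bSeq, oddFac]

lemma bSeq_one : bSeq 1 = 105 := by
  have h : oddFac 3 = 105 := by decide
  norm_num [bSeq, h, Nat.factorial]

lemma cseq_zero : cseq 0 = 15 := by
  have h : oddFac 2 = 15 := by decide
  norm_num [cseq, h, Nat.factorial]

lemma Bpoly_zero : Bpoly 0 = 0 := by
  unfold Bpoly
  rw [Finset.Icc_eq_empty (by norm_num)]
  simp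

lemma Ekey (n : ℕ) : ∀ x : ℚ,
    18*(6*x+1)*(6*x+5)*(6*x+7) * eval (x+1) (Bpoly n)
      = 648*x*(6*x+1)*(x+(n:ℚ)+1) * eval x (Bpoly n)
        + (-108*x*(6*x+1) - 18*(6*x+5)*(6*x+1) + 1296*x*(x+(n:ℚ)+1)) * bSeq n
        - 6*bSeq (n+1)*x + 6*cseq n*(x+(n:ℚ)+1) := by
  induction n with
  | zero =>
    intro x
    rw [Bpoly_zero]
    simp only [eval_zero, Nat.cast_zero]
    rw [bSeq_zero, bSeq_one, cseq_zero]
    ring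
  | succ n IH =>
    intro x
    rw [eval_Bpoly_succ n (x+1), eval_Bpoly_succ n x]
    have h1 := e1 n
    have h2 := e2 n
    have h3 := e3 n
    have h4 := e1 (n+1)
    push_cast at h4 ⊢
    have hK : ((6*(n:ℚ)+3)*(6*(n:ℚ)+5)*(2*(n:ℚ)+3)*(2*(n:ℚ)+4)) ≠ 0 := by positivity
    apply mul_left_cancel₀ hK
    linear_combination (((6*(n:ℚ)+3)*(6*(n:ℚ)+5)*(2*(n:ℚ)+3)*(2*(n:ℚ)+4)) * (108*(x+(n:ℚ)+2))) * IH x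
      + ((16200) + (70740)*(n:ℚ)^1 + (104760)*(n:ℚ)^2 + (62640)*(n:ℚ)^3 + (12960)*(n:ℚ)^4 + (-563760)*x^1 + (-2811672)*x^1*(n:ℚ)^1 + (-5173632)*x^1*(n:ℚ)^2 + (-4442688)*x^1*(n:ℚ)^3 + (-1804032)*x^1*(n:ℚ)^4 + (-279936)*x^1*(n:ℚ)^5 + (-116640)*x^2 + (-509328)*x^2*(n:ℚ)^1 + (-754272)*x^2*(n:ℚ)^2 + (-451008)*x^2*(n:ℚ)^3 + (-93312)*x^2*(n:ℚ)^4) * h1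
      + ((-97200) + (-230040)*(n:ℚ)^1 + (-168480)*(n:ℚ)^2 + (-38880)*(n:ℚ)^3 + (2099520)*x^1 + (6368544)*x^1*(n:ℚ)^1 + (6951744)*x^1*(n:ℚ)^2 + (3265920)*x^1*(n:ℚ)^3 + (559872)*x^1*(n:ℚ)^4 + (699840)*x^2 + (1656288)*x^2*(n:ℚ)^1 + (1213056)*x^2*(n:ℚ)^2 + (279936)*x^2*(n:ℚ)^3) * h2
      + ((-180) + (-666)*(n:ℚ)^1 + (-720)*(n:ℚ)^2 + (-216)*(n:ℚ)^3 + (1080)*x^1 + (3996)*x^1*(n:ℚ)^1 + (4320)*x^1*(n:ℚ)^2 + (1296)*x^1*(n:ℚ)^3) * h3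
      + ((1080)*x^1 + (4716)*x^1*(n:ℚ)^1 + (6984)*x^1*(n:ℚ)^2 + (4176)*x^1*(n:ℚ)^3 + (864)*x^1*(n:ℚ)^4) * h4

lemma key (n : ℕ) :
    X*(6*X+1)*(6*X+7) * Bpoly (n+1) + C (bSeq (n+1)) * (X*(6*X+7))
      = -(3*(6*X+1)*(6*X+5)*(6*X+7)*(6*X+7)) * ((Bpoly n).comp (X+1))
        - 3*(6*X+1)*(6*X+5)*(6*X+7) * C (bSeq n)
        + 216*X*(6*X+1)*(6*X+7)*(X + (n:ℚ[X]) + 1) * Bpoly n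
        + 216*X*(6*X+7)*(X + (n:ℚ[X]) + 1) * C (bSeq n)
        + C (cseq n) * (X + (n:ℚ[X]) + 1) * (6*X+7) := by
  apply Polynomial.funext
  intro x
  simp only [eval_mul, eval_add, eval_sub, eval_neg, eval_C, eval_X, eval_comp, eval_ofNat,
    eval_natCast, eval_one]
  rw [eval_Bpoly_succ]
  linear_combination ((6*x+7)/6) * (Ekey n x)

/-- The identity in `ℚ(x)`, for `n ≥ 0`:
`B_{n+1}(x) + b_{n+1}/(6x+1) = −(3(6x+5)(6x+7)/x)·(B_n(x+1) + b_n/(6x+7))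
 + 216(x+n+1)·(B_n(x) + b_n/(6x+1)) + (2^{n+1}·(6n+5)!!/(2n+2)!)·(x+n+1)/(x(6x+1))`.
Here `(6n+5)!! = oddFac (3n+2)`. -/
theorem stmt7 (n : ℕ) :
    Bf (n+1) + cst (bSeq (n+1)) / (6*Xr+1)
      = -(3 * (6*Xr+5) * (6*Xr+7) / Xr) * (BfShiftUp n + cst (bSeq n) / (6*Xr+7))
        + 216 * (Xr + (n : RatFunc ℚ) + 1) * (Bf n + cst (bSeq n) / (6*Xr+1))
        + cst (2^(n+1) * (oddFac (3*n+2) : ℚ) / (2*n+2).factorial)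
            * (Xr + (n : RatFunc ℚ) + 1) / (Xr * (6*Xr+1)) := by
  have hcs : (2^(n+1) * (oddFac (3*n+2) : ℚ) / (2*n+2).factorial) = cseq n := rfl
  rw [hcs]
  have h1p : (6*X+1 : ℚ[X]) ≠ 0 := by
    intro h
    have h0 := congrArg (Polynomial.eval 0) h
    simp at h0
  have h7p : (6*X+7 : ℚ[X]) ≠ 0 := by
    intro h
    have h0 := congrArg (Polynomial.eval 0) h
    simp at h0
  have hX : (RatFunc.X : RatFunc ℚ) ≠ 0 := RatFunc.X_ne_zero
  have h1 : (6*RatFunc.X+1 : RatFunc ℚ) ≠ 0 := by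
    have e : (6*RatFunc.X+1 : RatFunc ℚ) = algebraMap (Polynomial ℚ) (RatFunc ℚ) (6*X+1) := by
      simp [map_add, map_mul, map_ofNat, RatFunc.algebraMap_X]
    rw [e]
    exact RatFunc.algebraMap_ne_zero h1p
  have h7 : (6*RatFunc.X+7 : RatFunc ℚ) ≠ 0 := by
    have e : (6*RatFunc.X+7 : RatFunc ℚ) = algebraMap (Polynomial ℚ) (RatFunc ℚ) (6*X+7) := by
      simp [map_add, map_mul, map_ofNat, RatFunc.algebraMap_X]
    rw [e]
    exact RatFunc.algebraMap_ne_zero h7p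
  have key' := congrArg (algebraMap (Polynomial ℚ) (RatFunc ℚ)) (key n)
  simp only [map_add, map_mul, map_neg, map_sub, map_ofNat, map_one, map_natCast,
    RatFunc.algebraMap_C, RatFunc.algebraMap_X] at key'
  have hCcast : ∀ q : ℚ, RatFunc.C q = (q : RatFunc ℚ) := fun q => eq_ratCast RatFunc.C q
  simp only [hCcast] at key' ⊢
  unfold Bf BfShiftUp cst Xr
  simp only [hCcast]
  field_simp
  apply mul_left_cancel₀ h7
  linear_combination key'
end
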